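/- Let (G=(V,E),R) be a graph with roots and M a matroid on R of rank k with rank function r_M, satisfying (C1): R_v is independent in M for each v∈V. Let N(f_{M,k}) be the matroid on E induced by f_{M,k}. Then for every F⊆E, the rank of F in N(f_{M,k}) equals the minimum, over all partitions P of V into nonempty subsets, of |δ_F(P)| + k(|V|−|P|) − |R| + Σ_{X∈P} r_M(R_X). -/
import Mathlib


open Finset
open scoped Classical

/-- Vertex set `V(F)` of an edge subset `F`: vertices incident to an edge of `F`. -/
noncomputable def incVerts {V E : Type*} [Fintype V] (ends : E → Sym2 V) (F : Finset E) :
    Finset V :=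
  Finset.univ.filter (fun v => ∃ e ∈ F, v ∈ ends e)

/-- The multiset `R_v` of roots located at a vertex `v` (as a set of root indices). -/
noncomputable def rootsAt {V ι : Type*} [Fintype ι] (root : ι → V) (v : V) : Finset ι :=
  Finset.univ.filter (fun i => root i = v)

/-- The multiset `R_F` of roots located at vertices of `V(F)`. -/
noncomputable def rootsOf {V E ι : Type*} [Fintype V] [Fintype ι] (ends : E → Sym2 V)
    (root : ι → V) (F : Finset E) : Finset ι :=
  Finset.univ.filter (fun i => root i ∈ incVerts ends F)

/-- The multiset `R_X` of roots located at vertices of `X ⊆ V`. -/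
noncomputable def rootsIn {V ι : Type*} [Fintype ι] (root : ι → V) (X : Finset V) : Finset ι :=
  Finset.univ.filter (fun i => root i ∈ X)

/-- A matroid on a finite ground type `ι`, given by its rank function. -/
structure FinMatroid (ι : Type*) [Fintype ι] where
  rk : Finset ι → ℕ
  rk_le_card : ∀ X : Finset ι, rk X ≤ X.card
  rk_mono : ∀ ⦃X Y : Finset ι⦄, X ⊆ Y → rk X ≤ rk Y
  rk_submodular : ∀ X Y : Finset ι, rk (X ∪ Y) + rk (X ∩ Y) ≤ rk X + rk Y

/-- Independence in a matroid given by a rank function. -/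
def FinMatroid.Indep {ι : Type*} [Fintype ι] (M : FinMatroid ι) (X : Finset ι) : Prop :=
  M.rk X = X.card

/-- `X` is a base of the matroid with rank function `ρ`: independent and spanning. -/
def IsBaseOf {ι : Type*} [Fintype ι] (ρ : Finset ι → ℕ) (X : Finset ι) : Prop :=
  ρ X = X.card ∧ ρ X = ρ Finset.univ

/-- The closure (span) `sp(X)` of `X` in the matroid with rank function `ρ`. -/
noncomputable def spOf {ι : Type*} [Fintype ι] (ρ : Finset ι → ℕ) (X : Finset ι) : Finset ι :=
  Finset.univ.filter (fun y => ρ (insert y X) = ρ X)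

/-- Two vertices are adjacent via an edge of `F`. -/
def adjIn {V E : Type*} (ends : E → Sym2 V) (F : Finset E) (u v : V) : Prop :=
  ∃ e ∈ F, ends e = s(u, v)

/-- The edge set `F` is connected: all its incident vertices are mutually reachable in `F`. -/
def connIn {V E : Type*} [Fintype V] (ends : E → Sym2 V) (F : Finset E) : Prop :=
  ∀ u ∈ incVerts ends F, ∀ v ∈ incVerts ends F, Relation.ReflTransGen (adjIn ends F) u v

/-- `(T, r)` is a rooted tree: `T` is empty, or `T` is connected and acyclic with `r ∈ V(T)`.
(A connected edge set `T` is acyclic iff `|T| + 1 = |V(T)|`.) -/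
def IsRootedTree {V E : Type*} [Fintype V] (ends : E → Sym2 V) (T : Finset E) (r : V) : Prop :=
  T = ∅ ∨ (connIn ends T ∧ T.card + 1 = (incVerts ends T).card ∧ r ∈ incVerts ends T)

/-- The vertex set `V(T, r) = V(T) ∪ {r}` spanned by the rooted tree `(T, r)`. -/
noncomputable def treeVerts {V E : Type*} [Fintype V] (ends : E → Sym2 V) (T : Finset E)
    (r : V) : Finset V :=
  insert r (incVerts ends T)

/-- `T` is a spanning tree on the vertex set `X`. -/
def IsSpanningTreeOn {V E : Type*} [Fintype V] (ends : E → Sym2 V) (X : Finset V)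
    (T : Finset E) : Prop :=
  incVerts ends T ⊆ X ∧ (∀ u ∈ X, ∀ v ∈ X, Relation.ReflTransGen (adjIn ends T) u v) ∧
    T.card + 1 = X.card

/-- The family `T` is a basic rooted-tree decomposition of the subgraph with vertex set `Vs`,
edge set `Es` and roots indexed by `Rs`, with respect to the matroid (on `Rs`) whose rank
function is `ρ`: the `T i` are edge-disjoint rooted trees partitioning `Es`, and every vertex
of `Vs` is spanned by a family of rooted trees whose root multiset is a base. -/
def IsBasicDecompFam {V E ι : Type*} [Fintype V] [Fintype ι] (ends : E → Sym2 V) (root : ι → V)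
    (ρ : Finset ι → ℕ) (Vs : Finset V) (Rs : Finset ι) (Es : Finset E)
    (T : ι → Finset E) : Prop :=
  (∀ i ∈ Rs, T i ⊆ Es ∧ IsRootedTree ends (T i) (root i)) ∧
  (∀ i ∉ Rs, T i = ∅) ∧
  (∀ i j, i ≠ j → Disjoint (T i) (T j)) ∧
  (∀ e ∈ Es, ∃ i ∈ Rs, e ∈ T i) ∧
  (∀ v ∈ Vs, IsBaseOf ρ (Rs.filter (fun i => v ∈ treeVerts ends (T i) (root i))))

/-- `(G, R)` admits a basic rooted-tree decomposition. -/
def HasBasicDecomp {V E ι : Type*} [Fintype V] [Fintype ι] (ends : E → Sym2 V) (root : ι → V)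
    (ρ : Finset ι → ℕ) (Vs : Finset V) (Rs : Finset ι) (Es : Finset E) : Prop :=
  ∃ T : ι → Finset E, IsBasicDecompFam ends root ρ Vs Rs Es T

/-- Condition (C1): the root multiset at each vertex is independent. -/
def CondC1 {V ι : Type*} [Fintype ι] (root : ι → V) (ρ : Finset ι → ℕ) : Prop :=
  ∀ v : V, ρ (rootsAt root v) = (rootsAt root v).card

/-- Condition (C2): `|F| + |R_F| ≤ k|V(F)| - k + ρ(R_F)` for every nonempty `F ⊆ E`. -/
def CondC2 {V E ι : Type*} [Fintype V] [Fintype E] [Fintype ι] (ends : E → Sym2 V)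
    (root : ι → V) (ρ : Finset ι → ℕ) (k : ℕ) : Prop :=
  ∀ F : Finset E, F.Nonempty →
    F.card + (rootsOf ends root F).card + k ≤
      k * (incVerts ends F).card + ρ (rootsOf ends root F)

/-- Condition (C3): `|E| + |R| = k|V|`. -/
def CondC3 (V E ι : Type*) [Fintype V] [Fintype E] [Fintype ι] (k : ℕ) : Prop :=
  Fintype.card E + Fintype.card ι = k * Fintype.card V

/-- The function `f_{M,c}(F) = c(|V(F)| - 1) - (|R_F| - r_M(R_F))`, as an integer. -/
noncomputable def fcount {V E ι : Type*} [Fintype V] [Fintype E] [Fintype ι] (ends : E → Sym2 V)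
    (root : ι → V) (ρ : Finset ι → ℕ) (c : ℤ) (F : Finset E) : ℤ :=
  c * ((incVerts ends F).card - 1) -
    (((rootsOf ends root F).card : ℤ) - (ρ (rootsOf ends root F) : ℤ))

/-- The edges of `F` whose endpoints lie in two distinct classes of the partition
with classes `P`. -/
noncomputable def crossingEdges {V E : Type*} (ends : E → Sym2 V) (P : Finset (Finset V))
    (F : Finset E) : Finset E :=
  F.filter (fun e => ¬ ∃ X ∈ P, ∀ v ∈ ends e, v ∈ X)

/-- The rank of `F` in the matroid `N(f)` induced by the (integer-valued monotone
submodular) function `f` on `E`: the maximum cardinality of a subset `I ⊆ F` with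
`|I'| ≤ f(I')` for all nonempty `I' ⊆ I`. -/
noncomputable def inducedRank {E : Type*} (f : Finset E → ℤ) (F : Finset E) : ℕ :=
  (F.powerset.filter
    (fun I => ∀ I' ⊆ I, I'.Nonempty → (I'.card : ℤ) ≤ f I')).sup Finset.card


/-! ### Auxiliary development for the rank formula -/

set_option linter.unusedSectionVars false

section RankFormulaAux

variable {V E ι : Type*} [Fintype V] [Fintype E] [Fintype ι] [DecidableEq V]

/-- The function `h(X) = k(|X|-1) - (|R_X| - ρ(R_X))` on vertex sets. -/
noncomputable def hfun (root : ι → V) (ρ : Finset ι → ℕ) (k : ℕ) (X : Finset V) : ℤ :=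
  (k : ℤ) * ((X.card : ℤ) - 1) - (((rootsIn root X).card : ℤ) - (ρ (rootsIn root X) : ℤ))

/-- Edges of `S` with all endpoints inside `X`. -/
noncomputable def insideE (ends : E → Sym2 V) (S : Finset E) (X : Finset V) : Finset E :=
  S.filter (fun e => ∀ v ∈ ends e, v ∈ X)

variable (ends : E → Sym2 V) (root : ι → V) (M : FinMatroid ι) (k : ℕ)

lemma rootsOf_eq (S : Finset E) : rootsOf ends root S = rootsIn root (incVerts ends S) := by
  ext i; simp [rootsOf, rootsIn]

lemma fcount_eq_hfun (S : Finset E) :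
    fcount ends root M.rk (k : ℤ) S = hfun root M.rk k (incVerts ends S) := by
  rw [fcount, hfun, rootsOf_eq]

lemma rootsIn_union (X Y : Finset V) :
    rootsIn root (X ∪ Y) = rootsIn root X ∪ rootsIn root Y := by
  ext i; simp [rootsIn]

lemma rootsIn_inter (X Y : Finset V) :
    rootsIn root (X ∩ Y) = rootsIn root X ∩ rootsIn root Y := by
  ext i; simp [rootsIn]

lemma rootsIn_singleton (v : V) : rootsIn root {v} = rootsAt root v := by
  ext i; simp [rootsIn, rootsAt]

lemma rootsIn_mono {X Y : Finset V} (h : X ⊆ Y) : rootsIn root X ⊆ rootsIn root Y := by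
  intro i hi; simp only [rootsIn, mem_filter, mem_univ, true_and] at *; exact h hi

lemma card_rootsAt_le (hk : M.rk Finset.univ = k) (hC1 : CondC1 root M.rk) (v : V) :
    (rootsAt root v).card ≤ k := by
  rw [← hC1 v, ← hk]; exact M.rk_mono (subset_univ _)

lemma rootsIn_eq_biUnion (X : Finset V) :
    rootsIn root X = X.biUnion (fun v => rootsAt root v) := by
  ext i; simp [rootsIn, rootsAt, eq_comm]

lemma rootsAt_pairwise_disjoint {v w : V} (hvw : v ≠ w) :
    Disjoint (rootsAt root v) (rootsAt root w) := by
  rw [Finset.disjoint_left]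
  intro i hi hi'
  simp only [rootsAt, mem_filter, mem_univ, true_and] at hi hi'
  exact hvw (hi ▸ hi')

lemma card_rootsIn_le (hk : M.rk Finset.univ = k) (hC1 : CondC1 root M.rk) (X : Finset V) :
    (rootsIn root X).card ≤ k * X.card := by
  rw [rootsIn_eq_biUnion, Finset.card_biUnion]
  · calc ∑ v ∈ X, (rootsAt root v).card ≤ ∑ _v ∈ X, k :=
        Finset.sum_le_sum fun v _ => card_rootsAt_le root M k hk hC1 v
      _ = k * X.card := by rw [Finset.sum_const, smul_eq_mul, mul_comm]
  · intro v _ w _ hvw; exact rootsAt_pairwise_disjoint root hvw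

lemma hfun_mono (hk : M.rk Finset.univ = k) (hC1 : CondC1 root M.rk)
    {X Y : Finset V} (hXY : X ⊆ Y) : hfun root M.rk k X ≤ hfun root M.rk k Y := by
  have hY : Y = X ∪ (Y \ X) := by rw [Finset.union_sdiff_of_subset hXY]
  have hcard : Y.card = X.card + (Y \ X).card := by
    have h1 := Finset.card_sdiff_of_subset hXY
    have h2 := Finset.card_le_card hXY
    omega
  have hroots : rootsIn root Y = rootsIn root X ∪ rootsIn root (Y \ X) := by
    conv_lhs => rw [hY]
    exact rootsIn_union root X (Y \ X)
  have hdis : Disjoint (rootsIn root X) (rootsIn root (Y \ X)) := by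
    rw [Finset.disjoint_left]
    intro i hi hi'
    simp only [rootsIn, mem_filter, mem_univ, true_and] at hi hi'
    exact (Finset.mem_sdiff.mp hi').2 hi
  have hrc : (rootsIn root Y).card = (rootsIn root X).card + (rootsIn root (Y \ X)).card := by
    rw [hroots, Finset.card_union_of_disjoint hdis]
  have h1 : (rootsIn root (Y \ X)).card ≤ k * (Y \ X).card :=
    card_rootsIn_le root M k hk hC1 (Y \ X)
  have h2 : M.rk (rootsIn root X) ≤ M.rk (rootsIn root Y) :=
    M.rk_mono (rootsIn_mono root hXY)
  rw [hfun, hfun]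
  have hcard' : (Y.card : ℤ) = (X.card : ℤ) + ((Y \ X).card : ℤ) := by exact_mod_cast hcard
  have hrc' : ((rootsIn root Y).card : ℤ) =
      ((rootsIn root X).card : ℤ) + ((rootsIn root (Y \ X)).card : ℤ) := by exact_mod_cast hrc
  have h1' : ((rootsIn root (Y \ X)).card : ℤ) ≤ (k : ℤ) * ((Y \ X).card : ℤ) := by
    exact_mod_cast h1
  have h2' : (M.rk (rootsIn root X) : ℤ) ≤ (M.rk (rootsIn root Y) : ℤ) := by exact_mod_cast h2
  have hkd : (k : ℤ) * ((Y.card : ℤ) - 1) =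
      (k : ℤ) * ((X.card : ℤ) - 1) + (k : ℤ) * (((Y \ X).card : ℤ)) := by
    linear_combination (k : ℤ) * hcard'
  linarith [hkd, hrc', h1', h2']

lemma hfun_singleton (hC1 : CondC1 root M.rk) (v : V) : hfun root M.rk k {v} = 0 := by
  rw [hfun, rootsIn_singleton, hC1 v]
  simp

lemma hfun_nonneg (hk : M.rk Finset.univ = k) (hC1 : CondC1 root M.rk)
    {X : Finset V} (hX : X.Nonempty) : 0 ≤ hfun root M.rk k X := by
  obtain ⟨v, hv⟩ := hX
  rw [← hfun_singleton root M k hC1 v]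
  exact hfun_mono root M k hk hC1 (Finset.singleton_subset_iff.mpr hv)

lemma hfun_submod (X Y : Finset V) :
    hfun root M.rk k (X ∪ Y) + hfun root M.rk k (X ∩ Y) ≤
      hfun root M.rk k X + hfun root M.rk k Y := by
  have hc : (X ∪ Y).card + (X ∩ Y).card = X.card + Y.card :=
    Finset.card_union_add_card_inter X Y
  have hrc : (rootsIn root (X ∪ Y)).card + (rootsIn root (X ∩ Y)).card =
      (rootsIn root X).card + (rootsIn root Y).card := by
    rw [rootsIn_union, rootsIn_inter]
    exact Finset.card_union_add_card_inter _ _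
  have hsub : M.rk (rootsIn root (X ∪ Y)) + M.rk (rootsIn root (X ∩ Y)) ≤
      M.rk (rootsIn root X) + M.rk (rootsIn root Y) := by
    rw [rootsIn_union, rootsIn_inter]
    exact M.rk_submodular (rootsIn root X) (rootsIn root Y)
  rw [hfun, hfun, hfun, hfun]
  have hc' : ((X ∪ Y).card : ℤ) + ((X ∩ Y).card : ℤ) = (X.card : ℤ) + (Y.card : ℤ) := by
    exact_mod_cast hc
  have hrc' : ((rootsIn root (X ∪ Y)).card : ℤ) + ((rootsIn root (X ∩ Y)).card : ℤ) =
      ((rootsIn root X).card : ℤ) + ((rootsIn root Y).card : ℤ) := by exact_mod_cast hrc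
  have hsub' : (M.rk (rootsIn root (X ∪ Y)) : ℤ) + (M.rk (rootsIn root (X ∩ Y)) : ℤ) ≤
      (M.rk (rootsIn root X) : ℤ) + (M.rk (rootsIn root Y) : ℤ) := by
    exact_mod_cast hsub
  have hkmul : (k : ℤ) * (((X ∪ Y).card : ℤ) - 1) + (k : ℤ) * (((X ∩ Y).card : ℤ) - 1) =
      (k : ℤ) * ((X.card : ℤ) - 1) + (k : ℤ) * ((Y.card : ℤ) - 1) := by
    linear_combination (k : ℤ) * hc'
  linarith [hkmul, hrc', hsub']


lemma insideE_subset (S : Finset E) (X : Finset V) : insideE ends S X ⊆ S :=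
  Finset.filter_subset _ _

lemma incVerts_insideE_subset (S : Finset E) (X : Finset V) :
    incVerts ends (insideE ends S X) ⊆ X := by
  intro v hv
  simp only [incVerts, mem_filter, mem_univ, true_and] at hv
  obtain ⟨e, he, hve⟩ := hv
  simp only [insideE, mem_filter] at he
  exact he.2 v hve

lemma insideE_inter (S : Finset E) (X Y : Finset V) :
    insideE ends S X ∩ insideE ends S Y = insideE ends S (X ∩ Y) := by
  ext e
  simp only [insideE, Finset.mem_inter, mem_filter]
  constructor
  · rintro ⟨⟨hS, hX⟩, _, hY⟩
    exact ⟨hS, fun v hv => ⟨hX v hv, hY v hv⟩⟩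
  · rintro ⟨hS, hXY⟩
    exact ⟨⟨hS, fun v hv => (hXY v hv).1⟩, hS, fun v hv => (hXY v hv).2⟩

lemma insideE_union_subset (S : Finset E) (X Y : Finset V) :
    insideE ends S X ∪ insideE ends S Y ⊆ insideE ends S (X ∪ Y) := by
  intro e he
  simp only [insideE, Finset.mem_union, mem_filter] at he ⊢
  rcases he with ⟨hS, h⟩ | ⟨hS, h⟩
  · exact ⟨hS, fun v hv => Or.inl (h v hv)⟩
  · exact ⟨hS, fun v hv => Or.inr (h v hv)⟩

lemma insideE_supermod (S : Finset E) (X Y : Finset V) :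
    (insideE ends S X).card + (insideE ends S Y).card ≤
      (insideE ends S (X ∪ Y)).card + (insideE ends S (X ∩ Y)).card := by
  have h1 : (insideE ends S X).card + (insideE ends S Y).card =
      (insideE ends S X ∪ insideE ends S Y).card + (insideE ends S (X ∩ Y)).card := by
    rw [← insideE_inter]
    exact (Finset.card_union_add_card_inter _ _).symm
  rw [h1]
  exact Nat.add_le_add_right (Finset.card_le_card (insideE_union_subset ends S X Y)) _

/-- Independence of `I` with respect to the count function. -/
def IndepCF (I : Finset E) : Prop :=
  ∀ I' ⊆ I, I'.Nonempty → (I'.card : ℤ) ≤ fcount ends root M.rk (k : ℤ) I'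

lemma card_insideE_le (hk : M.rk Finset.univ = k) (hC1 : CondC1 root M.rk)
    {I : Finset E} (hI : IndepCF ends root M k I) {X : Finset V} (hX : X.Nonempty) :
    ((insideE ends I X).card : ℤ) ≤ hfun root M.rk k X := by
  rcases (insideE ends I X).eq_empty_or_nonempty with h | h
  · rw [h]; simpa using hfun_nonneg root M k hk hC1 hX
  · calc ((insideE ends I X).card : ℤ) ≤ fcount ends root M.rk (k : ℤ) (insideE ends I X) :=
        hI _ (insideE_subset ends I X) h
      _ = hfun root M.rk k (incVerts ends (insideE ends I X)) := fcount_eq_hfun ends root M k _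
      _ ≤ hfun root M.rk k X :=
        hfun_mono root M k hk hC1 (incVerts_insideE_subset ends I X)

/-- Edge-counting: every edge is either crossing or inside exactly one part. -/
lemma card_split (P : Finpartition (Finset.univ : Finset V)) (S : Finset E) :
    S.card = (crossingEdges ends P.parts S).card + ∑ X ∈ P.parts, (insideE ends S X).card := by
  classical
  have hbi : P.parts.biUnion (fun X => insideE ends S X) =
      S.filter (fun e => ∃ X ∈ P.parts, ∀ v ∈ ends e, v ∈ X) := by
    ext e
    simp only [Finset.mem_biUnion, insideE, mem_filter]
    constructor
    · rintro ⟨X, hX, hS, h⟩; exact ⟨hS, X, hX, h⟩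
    · rintro ⟨hS, X, hX, h⟩; exact ⟨X, hX, hS, h⟩
  have hdisj : ∀ X ∈ P.parts, ∀ Y ∈ P.parts, X ≠ Y →
      Disjoint (insideE ends S X) (insideE ends S Y) := by
    intro X hX Y hY hXY
    rw [Finset.disjoint_left]
    intro e heX heY
    simp only [insideE, mem_filter] at heX heY
    obtain ⟨a, ha⟩ : ∃ a, a ∈ ends e := ⟨(ends e).out.1, Sym2.out_fst_mem _⟩
    exact hXY (P.eq_of_mem_parts hX hY (heX.2 a ha) (heY.2 a ha))
  have hsum : ∑ X ∈ P.parts, (insideE ends S X).card =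
      (S.filter (fun e => ∃ X ∈ P.parts, ∀ v ∈ ends e, v ∈ X)).card := by
    rw [← hbi, Finset.card_biUnion hdisj]
  have hcr : crossingEdges ends P.parts S =
      S \ S.filter (fun e => ∃ X ∈ P.parts, ∀ v ∈ ends e, v ∈ X) := by
    ext e
    simp only [crossingEdges, mem_filter, Finset.mem_sdiff]
    aesop
  have hsub : S.filter (fun e => ∃ X ∈ P.parts, ∀ v ∈ ends e, v ∈ X) ⊆ S :=
    Finset.filter_subset _ _
  rw [hsum, hcr, Finset.card_sdiff_of_subset hsub]
  have := Finset.card_le_card hsub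
  omega

/-- Sum of `hfun` over parts equals the RHS expression terms. -/
lemma sum_hfun_parts (P : Finpartition (Finset.univ : Finset V)) :
    ∑ X ∈ P.parts, hfun root M.rk k X =
      (k : ℤ) * ((Fintype.card V : ℤ) - (P.parts.card : ℤ)) - (Fintype.card ι : ℤ) +
        ∑ X ∈ P.parts, (M.rk (rootsIn root X) : ℤ) := by
  classical
  have hV : ∑ X ∈ P.parts, (X.card : ℤ) = (Fintype.card V : ℤ) := by
    rw [← Nat.cast_sum]
    norm_cast
    rw [P.sum_card_parts]
    exact Finset.card_univ
  have hroots : ∑ X ∈ P.parts, ((rootsIn root X).card : ℤ) = (Fintype.card ι : ℤ) := by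
    have hbi : P.parts.biUnion (fun X => rootsIn root X) = (Finset.univ : Finset ι) := by
      ext i
      simp only [Finset.mem_biUnion, mem_univ, iff_true]
      obtain ⟨X, hX, hiX⟩ := P.exists_mem (Finset.mem_univ (root i))
      exact ⟨X, hX, by simp only [rootsIn, mem_filter, mem_univ, true_and]; exact hiX⟩
    have hdisj : ∀ X ∈ P.parts, ∀ Y ∈ P.parts, X ≠ Y →
        Disjoint (rootsIn root X) (rootsIn root Y) := by
      intro X hX Y hY hXY
      rw [Finset.disjoint_left]
      intro i hiX hiY
      simp only [rootsIn, mem_filter, mem_univ, true_and] at hiX hiY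
      exact hXY (P.eq_of_mem_parts hX hY hiX hiY)
    rw [← Nat.cast_sum]
    norm_cast
    rw [← Finset.card_biUnion hdisj, hbi]
    exact Finset.card_univ
  calc ∑ X ∈ P.parts, hfun root M.rk k X
      = ∑ X ∈ P.parts, ((k : ℤ) * (X.card : ℤ) - (k : ℤ) - ((rootsIn root X).card : ℤ) +
          (M.rk (rootsIn root X) : ℤ)) :=
        Finset.sum_congr rfl (fun X _ => by rw [hfun]; ring)
    _ = (∑ X ∈ P.parts, (k : ℤ) * (X.card : ℤ)) - (P.parts.card : ℤ) * (k : ℤ) -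
          (∑ X ∈ P.parts, ((rootsIn root X).card : ℤ)) +
          ∑ X ∈ P.parts, (M.rk (rootsIn root X) : ℤ) := by
        rw [Finset.sum_add_distrib, Finset.sum_sub_distrib, Finset.sum_sub_distrib,
          Finset.sum_const, nsmul_eq_mul]
    _ = (k : ℤ) * ((Fintype.card V : ℤ) - (P.parts.card : ℤ)) - (Fintype.card ι : ℤ) +
          ∑ X ∈ P.parts, (M.rk (rootsIn root X) : ℤ) := by
        rw [← Finset.mul_sum, hV, hroots]; ring



lemma indep_card_le (hk : M.rk Finset.univ = k) (hC1 : CondC1 root M.rk)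
    (P : Finpartition (Finset.univ : Finset V)) {F I : Finset E} (hIF : I ⊆ F)
    (hI : IndepCF ends root M k I) :
    (I.card : ℤ) ≤ ((crossingEdges ends P.parts F).card : ℤ) +
      ∑ X ∈ P.parts, hfun root M.rk k X := by
  have hsplit := card_split ends P I
  have hcross : crossingEdges ends P.parts I ⊆ crossingEdges ends P.parts F := by
    intro e he
    simp only [crossingEdges, mem_filter] at he ⊢
    exact ⟨hIF he.1, he.2⟩
  have hcross' : ((crossingEdges ends P.parts I).card : ℤ) ≤
      ((crossingEdges ends P.parts F).card : ℤ) := by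
    exact_mod_cast Finset.card_le_card hcross
  have hsum : ∑ X ∈ P.parts, ((insideE ends I X).card : ℤ) ≤
      ∑ X ∈ P.parts, hfun root M.rk k X :=
    Finset.sum_le_sum fun X hX =>
      card_insideE_le ends root M k hk hC1 hI (P.nonempty_of_mem_parts hX)
  have hsplit' : (I.card : ℤ) = ((crossingEdges ends P.parts I).card : ℤ) +
      ∑ X ∈ P.parts, ((insideE ends I X).card : ℤ) := by
    rw [hsplit]; push_cast; ring
  linarith

/-- A tight vertex set with respect to an independent edge set `I`. -/
def TightV (I : Finset E) (X : Finset V) : Prop :=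
  X.Nonempty ∧ ((insideE ends I X).card : ℤ) = hfun root M.rk k X

lemma tight_singleton (hk : M.rk Finset.univ = k) (hC1 : CondC1 root M.rk)
    {I : Finset E} (hI : IndepCF ends root M k I) (v : V) :
    TightV ends root M k I {v} := by
  have hempty : insideE ends I {v} = ∅ := by
    by_contra hne
    obtain ⟨e, he⟩ := Finset.nonempty_of_ne_empty hne
    simp only [insideE, mem_filter] at he
    have h1 : (1 : ℤ) ≤ fcount ends root M.rk (k : ℤ) {e} := by
      have := hI {e} (Finset.singleton_subset_iff.mpr he.1) (Finset.singleton_nonempty e)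
      simpa using this
    have hsub : incVerts ends {e} ⊆ {v} := by
      intro w hw
      simp only [incVerts, mem_filter, mem_univ, true_and, Finset.mem_singleton] at hw
      obtain ⟨e', he', hwe'⟩ := hw
      subst he'
      exact he.2 w hwe'
    have h2 : fcount ends root M.rk (k : ℤ) {e} ≤ hfun root M.rk k {v} := by
      rw [fcount_eq_hfun]
      exact hfun_mono root M k hk hC1 hsub
    rw [hfun_singleton root M k hC1 v] at h2
    linarith
  refine ⟨Finset.singleton_nonempty v, ?_⟩
  rw [hempty, hfun_singleton root M k hC1 v]
  simp

lemma tight_union (hk : M.rk Finset.univ = k) (hC1 : CondC1 root M.rk)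
    {I : Finset E} (hI : IndepCF ends root M k I) {X Y : Finset V}
    (hX : TightV ends root M k I X) (hY : TightV ends root M k I Y)
    (hXY : (X ∩ Y).Nonempty) : TightV ends root M k I (X ∪ Y) := by
  obtain ⟨x, hx⟩ := hX.1
  have hUne : (X ∪ Y).Nonempty := ⟨x, Finset.mem_union_left _ hx⟩
  have ha : ((insideE ends I (X ∪ Y)).card : ℤ) ≤ hfun root M.rk k (X ∪ Y) :=
    card_insideE_le ends root M k hk hC1 hI hUne
  have hb : ((insideE ends I (X ∩ Y)).card : ℤ) ≤ hfun root M.rk k (X ∩ Y) :=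
    card_insideE_le ends root M k hk hC1 hI hXY
  have hsup : ((insideE ends I X).card : ℤ) + ((insideE ends I Y).card : ℤ) ≤
      ((insideE ends I (X ∪ Y)).card : ℤ) + ((insideE ends I (X ∩ Y)).card : ℤ) := by
    exact_mod_cast insideE_supermod ends I X Y
  have hsm := hfun_submod root M k X Y
  exact ⟨hUne, le_antisymm ha (by linarith [hX.2, hY.2])⟩

/-- The maximal tight set containing `v`. -/
noncomputable def tightC (I : Finset E) (v : V) : Finset V :=
  insert v (((Finset.univ : Finset V).powerset.filter
    (fun X => TightV ends root M k I X ∧ v ∈ X)).sup id)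

lemma mem_tightC (I : Finset E) (v : V) : v ∈ tightC ends root M k I v :=
  Finset.mem_insert_self v _

lemma tight_insert_sup (hk : M.rk Finset.univ = k) (hC1 : CondC1 root M.rk)
    {I : Finset E} (hI : IndepCF ends root M k I) (v : V) (𝒮 : Finset (Finset V))
    (h𝒮 : ∀ X ∈ 𝒮, TightV ends root M k I X ∧ v ∈ X) :
    TightV ends root M k I (insert v (𝒮.sup id)) := by
  classical
  induction 𝒮 using Finset.induction_on with
  | empty =>
    simpa using tight_singleton ends root M k hk hC1 hI v
  | @insert X 𝒮 hX𝒮 ih =>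
    rw [Finset.sup_insert]
    have hXt := h𝒮 X (Finset.mem_insert_self X 𝒮)
    have hSt := ih (fun Y hY => h𝒮 Y (Finset.mem_insert_of_mem hY))
    have heq : (id X ⊔ 𝒮.sup id : Finset V) = X ∪ 𝒮.sup id := rfl
    rw [heq]
    have : insert v (X ∪ 𝒮.sup id) = X ∪ insert v (𝒮.sup id) := by
      rw [Finset.union_insert]
    rw [this]
    exact tight_union ends root M k hk hC1 hI hXt.1 hSt
      ⟨v, Finset.mem_inter.mpr ⟨hXt.2, Finset.mem_insert_self v _⟩⟩

lemma tight_tightC (hk : M.rk Finset.univ = k) (hC1 : CondC1 root M.rk)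
    {I : Finset E} (hI : IndepCF ends root M k I) (v : V) :
    TightV ends root M k I (tightC ends root M k I v) := by
  apply tight_insert_sup ends root M k hk hC1 hI v
  intro X hX
  simp only [mem_filter, Finset.mem_powerset] at hX
  exact hX.2

lemma subset_tightC {I : Finset E} {X : Finset V} {v : V}
    (hX : TightV ends root M k I X) (hv : v ∈ X) : X ⊆ tightC ends root M k I v := by
  have hmem : X ∈ (Finset.univ : Finset V).powerset.filter
      (fun Y => TightV ends root M k I Y ∧ v ∈ Y) :=
    Finset.mem_filter.mpr ⟨Finset.mem_powerset.mpr (Finset.subset_univ X), hX, hv⟩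
  exact (Finset.le_sup (f := id) hmem).trans (Finset.subset_insert v _)

lemma tightC_eq (hk : M.rk Finset.univ = k) (hC1 : CondC1 root M.rk)
    {I : Finset E} (hI : IndepCF ends root M k I) {v w : V}
    (hw : w ∈ tightC ends root M k I v) :
    tightC ends root M k I w = tightC ends root M k I v := by
  have h1 : tightC ends root M k I v ⊆ tightC ends root M k I w :=
    subset_tightC ends root M k (tight_tightC ends root M k hk hC1 hI v) hw
  have hv : v ∈ tightC ends root M k I w := h1 (mem_tightC ends root M k I v)
  have h2 : tightC ends root M k I w ⊆ tightC ends root M k I v :=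
    subset_tightC ends root M k (tight_tightC ends root M k hk hC1 hI w) hv
  exact Finset.Subset.antisymm h2 h1


end RankFormulaAux

/-- **Theorem 4 (rank formula for `N(f_{M,k})`).**
Let `(G, R)` be a graph with roots and `M` a matroid on `R` of rank `k` satisfying (C1).
Then for every `F ⊆ E`, the rank of `F` in `N(f_{M,k})` equals the minimum over all
partitions `P` of `V` into nonempty classes of
`|δ_F(P)| + k(|V| - |P|) - |R| + Σ_{X ∈ P} r_M(R_X)`. -/
theorem inducedRank_eq_min_partition {V E ι : Type*} [Fintype V] [Fintype E] [Fintype ι]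
    [DecidableEq V]
    (ends : E → Sym2 V) (root : ι → V) (M : FinMatroid ι) (k : ℕ)
    (hk : M.rk Finset.univ = k)
    (hC1 : CondC1 root M.rk)
    (F : Finset E) :
    (∀ P : Finpartition (Finset.univ : Finset V),
      (inducedRank (fcount ends root M.rk (k : ℤ)) F : ℤ) ≤
        ((crossingEdges ends P.parts F).card : ℤ) +
          (k : ℤ) * ((Fintype.card V : ℤ) - (P.parts.card : ℤ)) -
          (Fintype.card ι : ℤ) + ∑ X ∈ P.parts, (M.rk (rootsIn root X) : ℤ)) ∧
    (∃ P : Finpartition (Finset.univ : Finset V),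
      (inducedRank (fcount ends root M.rk (k : ℤ)) F : ℤ) =
        ((crossingEdges ends P.parts F).card : ℤ) +
          (k : ℤ) * ((Fintype.card V : ℤ) - (P.parts.card : ℤ)) -
          (Fintype.card ι : ℤ) + ∑ X ∈ P.parts, (M.rk (rootsIn root X) : ℤ)) := by
  classical
  -- a maximum independent subset of F
  obtain ⟨I, hImem, hIsup⟩ := Finset.exists_mem_eq_sup
    (F.powerset.filter
      (fun I => ∀ I' ⊆ I, I'.Nonempty → ((I'.card : ℤ) ≤ fcount ends root M.rk (k : ℤ) I')))
    ⟨∅, Finset.mem_filter.mpr ⟨Finset.mem_powerset.mpr (Finset.empty_subset F),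
      fun I' hI' h' => by
        rw [Finset.subset_empty] at hI'
        subst hI'
        exact absurd h' (by simp)⟩⟩
    Finset.card
  have hrank : inducedRank (fcount ends root M.rk (k : ℤ)) F = I.card := by
    rw [inducedRank]; exact hIsup
  have hIF : I ⊆ F := Finset.mem_powerset.mp (Finset.mem_filter.mp hImem).1
  have hI : IndepCF ends root M k I := (Finset.mem_filter.mp hImem).2
  have hub : ∀ P : Finpartition (Finset.univ : Finset V),
      (I.card : ℤ) ≤ ((crossingEdges ends P.parts F).card : ℤ) +
        (k : ℤ) * ((Fintype.card V : ℤ) - (P.parts.card : ℤ)) -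
        (Fintype.card ι : ℤ) + ∑ X ∈ P.parts, (M.rk (rootsIn root X) : ℤ) := by
    intro P
    have h1 := indep_card_le ends root M k hk hC1 P hIF hI
    have h2 := sum_hfun_parts root M k P
    linarith
  constructor
  · intro P
    rw [hrank]
    exact hub P
  · -- maximality of I
    have hmax : ∀ e ∈ F, e ∉ I → ∃ J, J ⊆ insert e I ∧ J.Nonempty ∧
        fcount ends root M.rk (k : ℤ) J < (J.card : ℤ) := by
      intro e heF heI
      by_contra hcon
      push_neg at hcon
      have hmem : insert e I ∈ F.powerset.filter
          (fun I => ∀ I' ⊆ I, I'.Nonempty → ((I'.card : ℤ) ≤ fcount ends root M.rk (k : ℤ) I')) :=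
        Finset.mem_filter.mpr ⟨Finset.mem_powerset.mpr (Finset.insert_subset heF hIF),
          fun J hJ hJne => hcon J hJ hJne⟩
      have hle : (insert e I).card ≤ I.card := by
        have := Finset.le_sup (f := Finset.card) hmem
        rw [hIsup] at this
        exact this
      rw [Finset.card_insert_of_notMem heI] at hle
      omega
    -- the partition into maximal tight sets
    have htC : ∀ v, TightV ends root M k I (tightC ends root M k I v) :=
      tight_tightC ends root M k hk hC1 hI
    obtain ⟨P, hPparts⟩ : ∃ P : Finpartition (Finset.univ : Finset V),
        P.parts = Finset.univ.image (tightC ends root M k I) := by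
      refine ⟨⟨Finset.univ.image (tightC ends root M k I), ?_, ?_, ?_⟩, rfl⟩
      · rw [Finset.supIndep_iff_pairwiseDisjoint]
        intro X hX Y hY hXY
        simp only [Finset.coe_image, Set.mem_image, Finset.coe_univ, Set.image_univ,
          Set.mem_range] at hX hY
        obtain ⟨v, rfl⟩ := hX
        obtain ⟨w, rfl⟩ := hY
        have : ∀ u : V, u ∈ tightC ends root M k I v → u ∈ tightC ends root M k I w → False := by
          intro u huv huw
          exact hXY (by
            rw [← tightC_eq ends root M k hk hC1 hI huv,
              tightC_eq ends root M k hk hC1 hI huw])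
        exact Finset.disjoint_left.mpr fun u hu hu' => this u hu hu'
      · apply Finset.Subset.antisymm
        · exact Finset.subset_univ _
        · intro v _
          have hv : v ∈ tightC ends root M k I v := mem_tightC ends root M k I v
          have hsub : tightC ends root M k I v ⊆
              (Finset.univ.image (tightC ends root M k I)).sup id :=
            Finset.le_sup (f := id) (b := tightC ends root M k I v)
              (Finset.mem_image_of_mem _ (Finset.mem_univ v))
          exact hsub hv
      · intro hbot
        simp only [Finset.mem_image] at hbot
        obtain ⟨v, _, hv⟩ := hbot
        have := mem_tightC ends root M k I v
        rw [hv] at this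
        exact absurd this (Finset.notMem_empty v)
    -- every crossing edge of F lies in I
    have hcrossI : crossingEdges ends P.parts F ⊆ crossingEdges ends P.parts I := by
      intro e he
      simp only [crossingEdges, mem_filter] at he ⊢
      refine ⟨?_, he.2⟩
      by_contra heI
      obtain ⟨J, hJsub, hJne, hJlt⟩ := hmax e he.1 heI
      have heJ : e ∈ J := by
        by_contra heJ
        have hJI : J ⊆ I := fun x hx =>
          (Finset.mem_insert.mp (hJsub hx)).resolve_left (fun h => heJ (h ▸ hx))
        exact absurd (hI J hJI hJne) (not_le.mpr hJlt)
      have hend : ∀ v ∈ ends e, v ∈ incVerts ends J := by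
        intro v hv
        simp only [incVerts, mem_filter, mem_univ, true_and]
        exact ⟨e, heJ, hv⟩
      have hsub : J.erase e ⊆ insideE ends I (incVerts ends J) := by
        intro e' he'
        have he'J : e' ∈ J := Finset.mem_of_mem_erase he'
        have he'ne : e' ≠ e := Finset.ne_of_mem_erase he'
        have he'I : e' ∈ I := (Finset.mem_insert.mp (hJsub he'J)).resolve_left he'ne
        simp only [insideE, mem_filter]
        refine ⟨he'I, fun v hv => ?_⟩
        simp only [incVerts, mem_filter, mem_univ, true_and]
        exact ⟨e', he'J, hv⟩
      have h1 : 1 ≤ J.card := Finset.card_pos.mpr ⟨e, heJ⟩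
      have hcard : ((J.erase e).card : ℤ) = (J.card : ℤ) - 1 := by
        rw [Finset.card_erase_of_mem heJ]
        omega
      have h2 : ((J.erase e).card : ℤ) ≤ ((insideE ends I (incVerts ends J)).card : ℤ) := by
        exact_mod_cast Finset.card_le_card hsub
      have h3 : fcount ends root M.rk (k : ℤ) J = hfun root M.rk k (incVerts ends J) :=
        fcount_eq_hfun ends root M k J
      have hJlt' : fcount ends root M.rk (k : ℤ) J + 1 ≤ (J.card : ℤ) :=
        Int.lt_iff_add_one_le.mp hJlt
      have hle : hfun root M.rk k (incVerts ends J) ≤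
          ((insideE ends I (incVerts ends J)).card : ℤ) := by linarith
      have hXne : (incVerts ends J).Nonempty := by
        obtain ⟨e0, he0⟩ := hJne
        refine ⟨(ends e0).out.1, ?_⟩
        simp only [incVerts, mem_filter, mem_univ, true_and]
        exact ⟨e0, he0, Sym2.out_fst_mem _⟩
      have htX : TightV ends root M k I (incVerts ends J) :=
        ⟨hXne, le_antisymm (card_insideE_le ends root M k hk hC1 hI hXne) hle⟩
      obtain ⟨u, hu⟩ : ∃ u, u ∈ ends e := ⟨(ends e).out.1, Sym2.out_fst_mem _⟩
      have hXC : incVerts ends J ⊆ tightC ends root M k I u :=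
        subset_tightC ends root M k htX (hend u hu)
      refine he.2 ⟨tightC ends root M k I u, ?_, fun v hv => hXC (hend v hv)⟩
      rw [hPparts]
      exact Finset.mem_image_of_mem _ (Finset.mem_univ u)
    -- conclusion
    have hsum_tight : ∑ X ∈ P.parts, hfun root M.rk k X =
        ∑ X ∈ P.parts, ((insideE ends I X).card : ℤ) := by
      apply Finset.sum_congr rfl
      intro X hXp
      rw [hPparts] at hXp
      simp only [Finset.mem_image] at hXp
      obtain ⟨v, _, rfl⟩ := hXp
      exact (htC v).2.symm
    have hsplitI : (I.card : ℤ) = ((crossingEdges ends P.parts I).card : ℤ) +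
        ∑ X ∈ P.parts, ((insideE ends I X).card : ℤ) := by
      rw [card_split ends P I]; push_cast; ring
    have hcc : ((crossingEdges ends P.parts F).card : ℤ) ≤
        ((crossingEdges ends P.parts I).card : ℤ) := by
      exact_mod_cast Finset.card_le_card hcrossI
    refine ⟨P, ?_⟩
    rw [hrank]
    have h2 := sum_hfun_parts root M k P
    have hlb : ((crossingEdges ends P.parts F).card : ℤ) +
        (k : ℤ) * ((Fintype.card V : ℤ) - (P.parts.card : ℤ)) -
        (Fintype.card ι : ℤ) + ∑ X ∈ P.parts, (M.rk (rootsIn root X) : ℤ) ≤ (I.card : ℤ) := by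
      linarith
    exact le_antisymm (hub P) hlb
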